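/- The partic algebra PP_3 (i.e. N = 4 positions with three generators a_1, a_2, a_3) has zero divisors: the element a_3^5 a_2^8 a_1^8 a_2^3 a_3 − a_3^5 a_2^7 a_1^8 a_2^4 a_3 is nonzero but is annihilated by left multiplication by a_2. -/

import Mathlib

inductive ParticRel (K : Type*) [CommRing K] (N : ℕ) :
    FreeAlgebra K (Fin (N - 1)) → FreeAlgebra K (Fin (N - 1)) → Prop
  | plac1 : ∀ i j : Fin (N - 1), (i : ℕ) = (j : ℕ) + 1 →
      ParticRel K N (FreeAlgebra.ι K i * FreeAlgebra.ι K j * FreeAlgebra.ι K i)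
        (FreeAlgebra.ι K i * FreeAlgebra.ι K i * FreeAlgebra.ι K j)
  | plac2 : ∀ i j : Fin (N - 1), (j : ℕ) = (i : ℕ) + 1 →
      ParticRel K N (FreeAlgebra.ι K i * FreeAlgebra.ι K j * FreeAlgebra.ι K i)
        (FreeAlgebra.ι K j * FreeAlgebra.ι K i * FreeAlgebra.ι K i)
  | comm : ∀ i j : Fin (N - 1), (i : ℕ) + 1 < (j : ℕ) →
      ParticRel K N (FreeAlgebra.ι K i * FreeAlgebra.ι K j)
        (FreeAlgebra.ι K j * FreeAlgebra.ι K i)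
  | partic : ∀ lo mid hi : Fin (N - 1), (mid : ℕ) = (lo : ℕ) + 1 → (hi : ℕ) = (mid : ℕ) + 1 →
      ParticRel K N
        (FreeAlgebra.ι K mid * FreeAlgebra.ι K lo * FreeAlgebra.ι K hi * FreeAlgebra.ι K mid)
        (FreeAlgebra.ι K hi * FreeAlgebra.ι K mid * FreeAlgebra.ι K lo * FreeAlgebra.ι K mid)

/-- The partic algebra `PP_N`, with generators `a_1, …, a_{N-1}`. -/
abbrev ParticAlgebra (K : Type*) [CommRing K] (N : ℕ) := RingQuot (ParticRel K N)

/-- The generator `a_i` of the partic algebra, for `1 ≤ i ≤ N-1` (junk value `0`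
outside that range). -/
noncomputable def ppa (K : Type*) [CommRing K] (N : ℕ) (i : ℕ) : ParticAlgebra K N :=
  if h : 1 ≤ i ∧ i ≤ N - 1 then
    RingQuot.mkAlgHom K (ParticRel K N) (FreeAlgebra.ι K ⟨i - 1, by omega⟩) else 0



private def G : Fin 3 → Function.End (ℕ × ℕ)
  | 0 => fun p => (p.1 + 1, p.2)
  | 1 => fun p => match p.1 with
      | 0 => (0, p.2)
      | Nat.succ a => (a, p.2 + 1)
  | 2 => 1

private lemma G_E1 : G 1 * G 0 * G 1 = G 1 * G 1 * G 0 := by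
  funext p
  rcases p with ⟨a, b⟩
  cases a <;> rfl

private lemma G_E3 : G 0 * G 1 * G 0 = G 1 * G 0 * G 0 := by
  funext p
  rcases p with ⟨a, b⟩
  cases a <;> rfl

section Part1
variable (K : Type*) [Field K]

private noncomputable def Phi :
    FreeAlgebra K (Fin 3) →ₐ[K] MonoidAlgebra K (Function.End (ℕ × ℕ)) :=
  FreeAlgebra.lift K fun i => MonoidAlgebra.of K (Function.End (ℕ × ℕ)) (G i)

private lemma Phi_rel : ∀ ⦃x y : FreeAlgebra K (Fin 3)⦄, ParticRel K 4 x y →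
    Phi K x = Phi K y := by
  show ∀ ⦃x y : FreeAlgebra K (Fin (4 - 1))⦄, ParticRel K 4 x y → Phi K x = Phi K y
  intro x y h
  induction h with
  | plac1 i j hij =>
      fin_cases i <;> fin_cases j <;> simp_all <;>
        simp only [Phi, map_mul, FreeAlgebra.lift_ι_apply, ← map_mul] <;>
        exact congrArg _ (by first | exact G_E1 | rfl |
          (funext p; rcases p with ⟨a,b⟩; cases a <;> rfl))
  | plac2 i j hij =>
      fin_cases i <;> fin_cases j <;> simp_all <;>
        simp only [Phi, map_mul, FreeAlgebra.lift_ι_apply, ← map_mul] <;>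
        exact congrArg _ (by first | exact G_E3 | rfl |
          (funext p; rcases p with ⟨a,b⟩; cases a <;> rfl))
  | comm i j hij =>
      fin_cases i <;> fin_cases j <;> simp_all <;>
        simp only [Phi, map_mul, FreeAlgebra.lift_ι_apply, ← map_mul] <;>
        exact congrArg _ (by funext p; rfl)
  | partic lo mid hi h1 h2 =>
      fin_cases lo <;> fin_cases mid <;> fin_cases hi <;> simp_all <;>
        simp only [Phi, map_mul, FreeAlgebra.lift_ι_apply, ← map_mul] <;>
        exact congrArg _ (by funext p; rcases p with ⟨a,b⟩; cases a <;> rfl)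

private noncomputable def Phi' :
    ParticAlgebra K 4 →ₐ[K] MonoidAlgebra K (Function.End (ℕ × ℕ)) :=
  RingQuot.liftAlgHom K ⟨Phi K, Phi_rel K⟩

private lemma Phi'_ppa1 : Phi' K (ppa K 4 1) = MonoidAlgebra.of K _ (G 0) := by
  rw [ppa, dif_pos (by norm_num), Phi', RingQuot.liftAlgHom_mkAlgHom_apply]
  exact FreeAlgebra.lift_ι_apply _ _

private lemma Phi'_ppa2 : Phi' K (ppa K 4 2) = MonoidAlgebra.of K _ (G 1) := by
  rw [ppa, dif_pos (by norm_num), Phi', RingQuot.liftAlgHom_mkAlgHom_apply]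
  exact FreeAlgebra.lift_ι_apply _ _

private lemma Phi'_ppa3 : Phi' K (ppa K 4 3) = MonoidAlgebra.of K _ (G 2) := by
  rw [ppa, dif_pos (by norm_num), Phi', RingQuot.liftAlgHom_mkAlgHom_apply]
  exact FreeAlgebra.lift_ι_apply _ _

private lemma Gne :
    G 2 ^ 5 * G 1 ^ 8 * G 0 ^ 8 * G 1 ^ 3 * G 2 ≠ G 2 ^ 5 * G 1 ^ 7 * G 0 ^ 8 * G 1 ^ 4 * G 2 := by
  intro h
  have h0 := congrFun h ((0, 0) : ℕ × ℕ)
  have e1 : (G 2 ^ 5 * G 1 ^ 8 * G 0 ^ 8 * G 1 ^ 3 * G 2) ((0, 0) : ℕ × ℕ) = (0, 8) := rfl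
  have e2 : (G 2 ^ 5 * G 1 ^ 7 * G 0 ^ 8 * G 1 ^ 4 * G 2) ((0, 0) : ℕ × ℕ) = (1, 7) := rfl
  rw [e1, e2] at h0
  simp at h0

end Part1
section ParticInfra
variable (K : Type*) [Field K]

private noncomputable def ee : Fin 3 → ParticAlgebra K 4 := fun i =>
  RingQuot.mkAlgHom K (ParticRel K 4) (FreeAlgebra.ι K i)

private lemma hr0 : ee K 1 * ee K 0 * ee K 1 = ee K 1 * ee K 1 * ee K 0 := by
  have h := RingQuot.mkAlgHom_rel K (ParticRel.plac1 (K := K) (N := 4) 1 0 rfl)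
  simp only [map_mul] at h; simpa [ee] using h

private lemma hr1 : ee K 2 * ee K 1 * ee K 2 = ee K 2 * ee K 2 * ee K 1 := by
  have h := RingQuot.mkAlgHom_rel K (ParticRel.plac1 (K := K) (N := 4) 2 1 rfl)
  simp only [map_mul] at h; simpa [ee] using h

private lemma hr2 : ee K 0 * ee K 1 * ee K 0 = ee K 1 * ee K 0 * ee K 0 := by
  have h := RingQuot.mkAlgHom_rel K (ParticRel.plac2 (K := K) (N := 4) 0 1 rfl)
  simp only [map_mul] at h; simpa [ee] using h

private lemma hr3 : ee K 1 * ee K 2 * ee K 1 = ee K 2 * ee K 1 * ee K 1 := by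
  have h := RingQuot.mkAlgHom_rel K (ParticRel.plac2 (K := K) (N := 4) 1 2 rfl)
  simp only [map_mul] at h; simpa [ee] using h

private lemma hr4 : ee K 0 * ee K 2 = ee K 2 * ee K 0 := by
  have h := RingQuot.mkAlgHom_rel K (ParticRel.comm (K := K) (N := 4) 0 2 (by norm_num))
  simp only [map_mul] at h; simpa [ee] using h

private lemma hr5 : ee K 1 * ee K 0 * ee K 2 * ee K 1 = ee K 2 * ee K 1 * ee K 0 * ee K 1 := by
  have h := RingQuot.mkAlgHom_rel K (ParticRel.partic (K := K) (N := 4) 0 1 2 rfl rfl)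
  simp only [map_mul] at h; simpa [ee] using h

-- tail-form rewrite lemmas, KB-oriented (left side is the forbidden factor)
private lemma T0 (t : ParticAlgebra K 4) :
    ee K 1 * (ee K 1 * (ee K 0 * t)) = ee K 1 * (ee K 0 * (ee K 1 * t)) := by
  simp only [← mul_assoc]; rw [hr0]

private lemma T1 (t : ParticAlgebra K 4) :
    ee K 2 * (ee K 2 * (ee K 1 * t)) = ee K 2 * (ee K 1 * (ee K 2 * t)) := by
  simp only [← mul_assoc]; rw [hr1]

private lemma T2 (t : ParticAlgebra K 4) :
    ee K 1 * (ee K 0 * (ee K 0 * t)) = ee K 0 * (ee K 1 * (ee K 0 * t)) := by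
  simp only [← mul_assoc]; rw [hr2]

private lemma T3 (t : ParticAlgebra K 4) :
    ee K 2 * (ee K 1 * (ee K 1 * t)) = ee K 1 * (ee K 2 * (ee K 1 * t)) := by
  simp only [← mul_assoc]; rw [hr3]

private lemma T4 (t : ParticAlgebra K 4) :
    ee K 2 * (ee K 0 * t) = ee K 0 * (ee K 2 * t) := by
  simp only [← mul_assoc]; rw [hr4]

private lemma T5 (t : ParticAlgebra K 4) :
    ee K 2 * (ee K 1 * (ee K 0 * (ee K 1 * t))) = ee K 1 * (ee K 0 * (ee K 2 * (ee K 1 * t))) := by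
  simp only [← mul_assoc]; rw [hr5]

private lemma T6 (t : ParticAlgebra K 4) :
    ee K 1 * (ee K 2 * (ee K 1 * (ee K 0 * t))) = ee K 1 * (ee K 0 * (ee K 2 * (ee K 1 * t))) := by
  rw [← T3, T0, T5]

private lemma T7 (t : ParticAlgebra K 4) :
    ee K 2 * (ee K 1 * (ee K 2 * (ee K 1 * (ee K 0 * t)))) =
    ee K 2 * (ee K 1 * (ee K 0 * (ee K 2 * (ee K 1 * t)))) := by
  rw [T6]

private lemma lhsEq :
    ee K 1 * (ee K 2 * (ee K 2 * (ee K 2 * (ee K 2 * (ee K 2 * (ee K 1 * (ee K 1 * (ee K 1 * (ee K 1 * (ee K 1 * (ee K 1 * (ee K 1 * (ee K 1 * (ee K 0 * (ee K 0 * (ee K 0 * (ee K 0 * (ee K 0 * (ee K 0 * (ee K 0 * (ee K 0 * (ee K 1 * (ee K 1 * (ee K 1 * (ee K 2))))))))))))))))))))))))) =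
    ee K 1 * (ee K 0 * (ee K 1 * (ee K 0 * (ee K 1 * (ee K 0 * (ee K 1 * (ee K 0 * (ee K 1 * (ee K 0 * (ee K 1 * (ee K 0 * (ee K 1 * (ee K 0 * (ee K 2 * (ee K 1 * (ee K 0 * (ee K 2 * (ee K 1 * (ee K 2 * (ee K 1 * (ee K 2 * (ee K 1 * (ee K 2 * (ee K 1 * (ee K 2))))))))))))))))))))))))) := by
  rw [T0 K, T0 K, T0 K, T0 K, T0 K, T0 K, T0 K, T0 K, T0 K, T0 K, T0 K, T0 K, T0 K, T0 K, T0 K]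
  rw [T0 K, T0 K, T0 K, T0 K, T0 K, T0 K, T0 K, T0 K, T0 K, T0 K, T0 K, T0 K, T0 K, T1 K, T1 K]
  rw [T1 K, T1 K, T4 K, T4 K, T1 K, T4 K, T1 K, T4 K, T1 K, T4 K, T4 K, T1 K, T4 K, T1 K, T4 K]
  rw [T4 K, T1 K, T4 K, T5 K, T5 K, T5 K, T5 K, T5 K, T0 K, T5 K, T5 K, T5 K, T5 K, T5 K, T0 K]
  rw [T5 K, T5 K, T5 K, T5 K, T5 K, T0 K, T5 K, T3 K, T3 K, T5 K, T5 K, T5 K, T5 K, T0 K, T5 K]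
  rw [T3 K, T5 K, T5 K, T5 K, T0 K, T5 K, T5 K, T5 K, T0 K, T6 K, T6 K]

private lemma rhsEq :
    ee K 1 * (ee K 2 * (ee K 2 * (ee K 2 * (ee K 2 * (ee K 2 * (ee K 1 * (ee K 1 * (ee K 1 * (ee K 1 * (ee K 1 * (ee K 1 * (ee K 1 * (ee K 0 * (ee K 0 * (ee K 0 * (ee K 0 * (ee K 0 * (ee K 0 * (ee K 0 * (ee K 0 * (ee K 1 * (ee K 1 * (ee K 1 * (ee K 1 * (ee K 2))))))))))))))))))))))))) =
    ee K 1 * (ee K 0 * (ee K 1 * (ee K 0 * (ee K 1 * (ee K 0 * (ee K 1 * (ee K 0 * (ee K 1 * (ee K 0 * (ee K 1 * (ee K 0 * (ee K 1 * (ee K 0 * (ee K 2 * (ee K 1 * (ee K 0 * (ee K 2 * (ee K 1 * (ee K 2 * (ee K 1 * (ee K 2 * (ee K 1 * (ee K 2 * (ee K 1 * (ee K 2))))))))))))))))))))))))) := by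
  rw [T0 K, T0 K, T0 K, T0 K, T0 K, T0 K, T0 K, T0 K, T0 K, T0 K, T0 K, T0 K, T0 K, T0 K, T0 K]
  rw [T0 K, T0 K, T0 K, T0 K, T0 K, T0 K, T1 K, T1 K, T1 K, T1 K, T2 K, T2 K, T2 K, T2 K, T2 K]
  rw [T2 K, T4 K, T4 K, T4 K, T4 K, T4 K, T4 K, T1 K, T4 K, T1 K, T4 K, T1 K, T2 K, T4 K, T4 K]
  rw [T4 K, T1 K, T4 K, T1 K, T4 K, T4 K, T1 K, T4 K, T5 K, T5 K, T5 K, T5 K, T5 K, T5 K, T5 K]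
  rw [T5 K, T5 K, T5 K, T5 K, T3 K, T3 K, T3 K, T5 K, T5 K, T5 K, T5 K, T5 K, T3 K, T3 K, T5 K]
  rw [T5 K, T5 K, T5 K, T3 K, T5 K, T5 K, T5 K, T5 K]

private lemma keyEq :
    ee K 1 * (ee K 2 * (ee K 2 * (ee K 2 * (ee K 2 * (ee K 2 * (ee K 1 * (ee K 1 * (ee K 1 * (ee K 1 * (ee K 1 * (ee K 1 * (ee K 1 * (ee K 1 * (ee K 0 * (ee K 0 * (ee K 0 * (ee K 0 * (ee K 0 * (ee K 0 * (ee K 0 * (ee K 0 * (ee K 1 * (ee K 1 * (ee K 1 * (ee K 2))))))))))))))))))))))))) =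
    ee K 1 * (ee K 2 * (ee K 2 * (ee K 2 * (ee K 2 * (ee K 2 * (ee K 1 * (ee K 1 * (ee K 1 * (ee K 1 * (ee K 1 * (ee K 1 * (ee K 1 * (ee K 0 * (ee K 0 * (ee K 0 * (ee K 0 * (ee K 0 * (ee K 0 * (ee K 0 * (ee K 0 * (ee K 1 * (ee K 1 * (ee K 1 * (ee K 1 * (ee K 2))))))))))))))))))))))))) :=
  (lhsEq K).trans (rhsEq K).symm

end ParticInfra

/-- The partic algebra on three generators `a_1, a_2, a_3` has zero divisors:
`a_3^5 a_2^8 a_1^8 a_2^3 a_3 − a_3^5 a_2^7 a_1^8 a_2^4 a_3` is nonzero but is annihilated by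
left multiplication by `a_2`. -/
theorem stmt11 (K : Type*) [Field K] :
    (ppa K 4 3 ^ 5 * ppa K 4 2 ^ 8 * ppa K 4 1 ^ 8 * ppa K 4 2 ^ 3 * ppa K 4 3 -
        ppa K 4 3 ^ 5 * ppa K 4 2 ^ 7 * ppa K 4 1 ^ 8 * ppa K 4 2 ^ 4 * ppa K 4 3 ≠ 0) ∧
      ppa K 4 2 *
        (ppa K 4 3 ^ 5 * ppa K 4 2 ^ 8 * ppa K 4 1 ^ 8 * ppa K 4 2 ^ 3 * ppa K 4 3 -
          ppa K 4 3 ^ 5 * ppa K 4 2 ^ 7 * ppa K 4 1 ^ 8 * ppa K 4 2 ^ 4 * ppa K 4 3) = 0 := by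
  constructor
  · intro hzero
    have h := congrArg (Phi' K) hzero
    rw [map_sub, map_zero, sub_eq_zero, map_mul, map_mul, map_mul, map_mul, map_mul, map_mul,
      map_mul, map_mul, map_pow, map_pow, map_pow, map_pow, map_pow, map_pow,
      Phi'_ppa1, Phi'_ppa2, Phi'_ppa3] at h
    simp only [MonoidAlgebra.of_apply, MonoidAlgebra.single_pow,
      MonoidAlgebra.single_mul_single, one_pow, one_mul, mul_one] at h
    have := MonoidAlgebra.single_inj.mp h
    rcases this with ⟨heq, -⟩ | ⟨h1, -⟩
    · exact Gne heq
    · exact one_ne_zero h1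
  · have h1 : ppa K 4 1 = ee K 0 := by rw [ppa, dif_pos (by norm_num)]; rfl
    have h2 : ppa K 4 2 = ee K 1 := by rw [ppa, dif_pos (by norm_num)]; rfl
    have h3 : ppa K 4 3 = ee K 2 := by rw [ppa, dif_pos (by norm_num)]; rfl
    rw [mul_sub, sub_eq_zero, h1, h2, h3]
    have h := keyEq K
    simp only [pow_succ, pow_zero, one_mul, mul_assoc]
    exact h
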